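/- For a > 0, the improper integral ∫_{0}^{∞} cos(a x²) cos(s x) dx converges for every real s and equals (1/2)·√(π/(2a))·(cos(s²/(4a)) + sin(s²/(4a))). -/

import Mathlib

open Filter Real Set MeasureTheory intervalIntegral Complex

noncomputable section FresnelProof

/-- derivative of the IBP antiderivative -/
lemma fresnel_hasDerivAt (b : ℂ) (hb : b ≠ 0) {x : ℝ} (hx : x ≠ 0) :
    HasDerivAt (fun y : ℝ => -Complex.exp (-b * (y : ℂ) ^ 2) / (2 * b * (y : ℂ)))
      (Complex.exp (-b * (x : ℂ) ^ 2) + Complex.exp (-b * (x : ℂ) ^ 2) / (2 * b * (x : ℂ) ^ 2))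
      x := by
  have hxC : (x : ℂ) ≠ 0 := Complex.ofReal_ne_zero.mpr hx
  have h1 : HasDerivAt (fun z : ℂ => -Complex.exp (-b * z ^ 2) / (2 * b * z))
      (Complex.exp (-b * (x : ℂ) ^ 2) + Complex.exp (-b * (x : ℂ) ^ 2) / (2 * b * (x : ℂ) ^ 2))
      (x : ℂ) := by
    have he : HasDerivAt (fun z : ℂ => Complex.exp (-b * z ^ 2))
        (Complex.exp (-b * (x : ℂ) ^ 2) * (-b * (2 * (x : ℂ)))) (x : ℂ) := by
      have hp : HasDerivAt (fun z : ℂ => -b * z ^ 2) (-b * (2 * (x : ℂ))) (x : ℂ) := by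
        simpa using ((hasDerivAt_pow 2 ((x : ℂ))).const_mul (-b))
      exact hp.cexp
    have hd : HasDerivAt (fun z : ℂ => 2 * b * z) (2 * b) (x : ℂ) := by
      simpa using (hasDerivAt_id ((x : ℂ))).const_mul (2 * b)
    have := (he.fun_neg.fun_div hd (by simp [hb, hxC]))
    refine this.congr_deriv ?_
    field_simp
    ring
  exact h1.comp_ofReal

lemma fresnel_ibp (b : ℂ) (hb : b ≠ 0) (R : ℝ) (hR : 1 ≤ R) :
    ∫ x in (1:ℝ)..R, Complex.exp (-b * (x : ℂ) ^ 2) =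
      Complex.exp (-b) / (2 * b) - Complex.exp (-b * (R : ℂ) ^ 2) / (2 * b * R)
        - ∫ x in (1:ℝ)..R, Complex.exp (-b * (x : ℂ) ^ 2) / (2 * b * (x : ℂ) ^ 2) := by
  have hpos : ∀ x ∈ Set.uIcc (1:ℝ) R, x ≠ 0 := by
    intro x hx
    rw [Set.uIcc_of_le hR] at hx
    linarith [hx.1]
  have hcont : ContinuousOn
      (fun x : ℝ => Complex.exp (-b * (x : ℂ) ^ 2) + Complex.exp (-b * (x : ℂ) ^ 2) / (2 * b * (x : ℂ) ^ 2))
      (Set.uIcc (1:ℝ) R) := by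
    apply ContinuousOn.add
    · exact (Complex.continuous_exp.comp (by continuity)).continuousOn
    · apply ContinuousOn.div
      · exact (Complex.continuous_exp.comp (by continuity)).continuousOn
      · exact (continuous_const.mul (Complex.continuous_ofReal.pow 2)).continuousOn
      · intro x hx
        have := hpos x hx
        simp [hb, Complex.ofReal_ne_zero.mpr this]
  have key := intervalIntegral.integral_eq_sub_of_hasDerivAt
    (fun x hx => fresnel_hasDerivAt b hb (hpos x hx))
    (hcont.intervalIntegrable)
  have hi1 : IntervalIntegrable (fun x : ℝ => Complex.exp (-b * (x : ℂ) ^ 2)) volume 1 R :=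
    ((Complex.continuous_exp.comp (by continuity)).continuousOn).intervalIntegrable
  have hi2 : IntervalIntegrable
      (fun x : ℝ => Complex.exp (-b * (x : ℂ) ^ 2) / (2 * b * (x : ℂ) ^ 2)) volume 1 R := by
    apply ContinuousOn.intervalIntegrable
    apply ContinuousOn.div
    · exact (Complex.continuous_exp.comp (by continuity)).continuousOn
    · exact (continuous_const.mul (Complex.continuous_ofReal.pow 2)).continuousOn
    · intro x hx
      have := hpos x hx
      simp [hb, Complex.ofReal_ne_zero.mpr this]
  rw [intervalIntegral.integral_add hi1 hi2] at key
  rw [eq_sub_iff_add_eq]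
  rw [key]
  push_cast
  ring


/-- The limiting value of `∫ x in 0..R, exp (-b x²)`. -/
def fresnelH (b : ℂ) : ℂ :=
  (∫ x in (0:ℝ)..1, Complex.exp (-b * (x : ℂ) ^ 2)) + Complex.exp (-b) / (2 * b)
    - ∫ x in Set.Ioi (1:ℝ), Complex.exp (-b * (x : ℂ) ^ 2) / (2 * b * (x : ℂ) ^ 2)

lemma fresnel_tail_integrable (b : ℂ) (hb : 0 ≤ b.re) (hb0 : b ≠ 0) :
    IntegrableOn (fun x : ℝ => Complex.exp (-b * (x : ℂ) ^ 2) / (2 * b * (x : ℂ) ^ 2))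
      (Set.Ioi (1:ℝ)) := by
  have habs : 0 < ‖b‖ := by simpa [norm_pos_iff] using hb0
  have hmeas : AEStronglyMeasurable
      (fun x : ℝ => Complex.exp (-b * (x : ℂ) ^ 2) / (2 * b * (x : ℂ) ^ 2))
      (volume.restrict (Set.Ioi (1:ℝ))) := by
    apply ContinuousOn.aestronglyMeasurable _ measurableSet_Ioi
    apply ContinuousOn.div
    · exact (Complex.continuous_exp.comp (by continuity)).continuousOn
    · exact (continuous_const.mul (Complex.continuous_ofReal.pow 2)).continuousOn
    · intro x hx
      have hx0 : (x:ℝ) ≠ 0 := by have := mem_Ioi.mp hx; positivity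
      simp [hb0, Complex.ofReal_ne_zero.mpr hx0]
  have hg : IntegrableOn (fun x : ℝ => (2 * ‖b‖)⁻¹ * x ^ (-2 : ℝ)) (Set.Ioi (1:ℝ)) :=
    (integrableOn_Ioi_rpow_of_lt (by norm_num) one_pos).const_mul _
  refine Integrable.mono' hg hmeas ?_
  filter_upwards [ae_restrict_mem measurableSet_Ioi] with x hx
  have hx1 : (1:ℝ) < x := hx
  have hx0 : (0:ℝ) < x := by linarith
  rw [norm_div]
  have h1 : ‖Complex.exp (-b * (x : ℂ) ^ 2)‖ ≤ 1 := by
    rw [Complex.norm_exp]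
    have : (-b * (x:ℂ)^2).re = -(b.re * x^2) := by
      simp only [Complex.neg_re, Complex.mul_re, ← Complex.ofReal_pow,
        Complex.ofReal_re, Complex.ofReal_im, mul_zero, sub_zero]
      ring
    rw [this]
    exact Real.exp_le_one_iff.mpr (by nlinarith)
  have h2 : ‖(2 * b * (x : ℂ) ^ 2 : ℂ)‖ = 2 * ‖b‖ * x ^ 2 := by
    simp [map_mul, Complex.norm_real, abs_of_pos hx0, _root_.sq_abs]
  rw [h2, Real.rpow_neg hx0.le]
  have hxne : (2 * ‖b‖ * x ^ 2) ≠ 0 := by positivity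
  calc ‖Complex.exp (-b * (x : ℂ) ^ 2)‖ / (2 * ‖b‖ * x ^ 2)
      ≤ 1 / (2 * ‖b‖ * x ^ 2) := by
        apply div_le_div_of_nonneg_right h1 (by positivity) |>.trans_eq rfl
    _ = (2 * ‖b‖)⁻¹ * (x ^ (2:ℝ))⁻¹ := by
        rw [Real.rpow_two]; field_simp


section
variable (b : ℂ)

lemma fresnel_intInt (c d : ℝ) :
    IntervalIntegrable (fun x : ℝ => Complex.exp (-b * (x : ℂ) ^ 2)) volume c d :=
  ((Complex.continuous_exp.comp (by continuity)).continuousOn).intervalIntegrable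

lemma fresnel_tendsto_F (hb : 0 ≤ b.re) (hb0 : b ≠ 0) :
    Tendsto (fun R : ℝ => ∫ x in (0:ℝ)..R, Complex.exp (-b * (x : ℂ) ^ 2)) atTop
      (nhds (fresnelH b)) := by
  have habs : 0 < ‖b‖ := by simpa [norm_pos_iff] using hb0
  have heq : ∀ᶠ R : ℝ in atTop,
      (∫ x in (0:ℝ)..R, Complex.exp (-b * (x : ℂ) ^ 2)) =
      (∫ x in (0:ℝ)..1, Complex.exp (-b * (x : ℂ) ^ 2)) + Complex.exp (-b) / (2 * b)
        - Complex.exp (-b * (R : ℂ) ^ 2) / (2 * b * R)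
        - ∫ x in (1:ℝ)..R, Complex.exp (-b * (x : ℂ) ^ 2) / (2 * b * (x : ℂ) ^ 2) := by
    filter_upwards [eventually_ge_atTop (1:ℝ)] with R hR
    rw [← intervalIntegral.integral_add_adjacent_intervals (fresnel_intInt b 0 1)
      (fresnel_intInt b 1 R), fresnel_ibp b hb0 R hR]
    ring
  rw [tendsto_congr' heq]
  have h1 : Tendsto (fun R : ℝ => Complex.exp (-b * (R : ℂ) ^ 2) / (2 * b * R)) atTop
      (nhds 0) := by
    apply squeeze_zero_norm' (a := fun R : ℝ => 1 / (2 * ‖b‖ * R))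
    · filter_upwards [eventually_gt_atTop (0:ℝ)] with R hR
      rw [norm_div]
      have h1 : ‖Complex.exp (-b * (R : ℂ) ^ 2)‖ ≤ 1 := by
        rw [Complex.norm_exp]
        have : (-b * (R:ℂ)^2).re = -(b.re * R^2) := by
          simp only [Complex.neg_re, Complex.mul_re, ← Complex.ofReal_pow,
            Complex.ofReal_re, Complex.ofReal_im, mul_zero, sub_zero]
          ring
        rw [this]
        exact Real.exp_le_one_iff.mpr (by nlinarith)
      have h2 : ‖(2 * b * (R : ℂ) : ℂ)‖ = 2 * ‖b‖ * R := by
        simp [map_mul, Complex.norm_real, abs_of_pos hR]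
      rw [h2]
      exact div_le_div_of_nonneg_right h1 (by positivity) |>.trans_eq (by ring_nf)
    · have : Tendsto (fun R : ℝ => 2 * ‖b‖ * R) atTop atTop :=
        (tendsto_id.const_mul_atTop (by positivity))
      have h0 := this.inv_tendsto_atTop
      have : (fun R : ℝ => 1 / (2 * ‖b‖ * R)) = (fun R : ℝ => 2 * ‖b‖ * R)⁻¹ := by
        funext R; simp [one_div]
      rw [this]
      exact h0
  have h2 : Tendsto (fun R : ℝ =>
      ∫ x in (1:ℝ)..R, Complex.exp (-b * (x : ℂ) ^ 2) / (2 * b * (x : ℂ) ^ 2)) atTop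
      (nhds (∫ x in Set.Ioi (1:ℝ), Complex.exp (-b * (x : ℂ) ^ 2) / (2 * b * (x : ℂ) ^ 2))) :=
    intervalIntegral_tendsto_integral_Ioi 1 (fresnel_tail_integrable b hb hb0) tendsto_id
  have h3 : Tendsto (fun R : ℝ =>
      ((∫ x in (0:ℝ)..1, Complex.exp (-b * (x : ℂ) ^ 2)) + Complex.exp (-b) / (2 * b)
        - Complex.exp (-b * (R : ℂ) ^ 2) / (2 * b * R))
        - ∫ x in (1:ℝ)..R, Complex.exp (-b * (x : ℂ) ^ 2) / (2 * b * (x : ℂ) ^ 2)) atTop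
      (nhds (((∫ x in (0:ℝ)..1, Complex.exp (-b * (x : ℂ) ^ 2)) + Complex.exp (-b) / (2 * b) - 0)
        - ∫ x in Set.Ioi (1:ℝ), Complex.exp (-b * (x : ℂ) ^ 2) / (2 * b * (x : ℂ) ^ 2))) :=
    (tendsto_const_nhds.sub h1).sub h2
  simpa [fresnelH, sub_zero] using h3

lemma fresnelH_eq_gauss (hb : 0 < b.re) :
    fresnelH b = (↑π / b) ^ (1 / 2 : ℂ) / 2 := by
  have h1 := fresnel_tendsto_F b hb.le (by intro h; rw [h] at hb; simp at hb)
  have h2 : Tendsto (fun R : ℝ => ∫ x in (0:ℝ)..R, Complex.exp (-b * (x : ℂ) ^ 2)) atTop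
      (nhds ((↑π / b) ^ (1 / 2 : ℂ) / 2)) := by
    rw [← integral_gaussian_complex_Ioi hb]
    exact intervalIntegral_tendsto_integral_Ioi 0
      (integrable_cexp_neg_mul_sq hb).integrableOn tendsto_id
  exact tendsto_nhds_unique h1 h2


end

section
variable {a : ℝ}

lemma fresnel_abs_lb (ha : 0 < a) (ε : ℝ) : a ≤ ‖(ε : ℂ) - a * I‖ := by
  have h := Complex.abs_im_le_norm ((ε : ℂ) - a * I)
  have him : ((ε : ℂ) - a * I).im = -a := by simp
  rw [him, abs_neg, abs_of_pos ha] at h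
  exact h

lemma fresnel_H_cont (ha : 0 < a) :
    Tendsto (fun ε : ℝ => fresnelH ((ε : ℂ) - a * I)) (nhdsWithin 0 (Set.Ioi 0))
      (nhds (fresnelH (-(a:ℂ) * I))) := by
  have hmem : ∀ᶠ ε : ℝ in nhdsWithin 0 (Set.Ioi 0), 0 < ε :=
    eventually_mem_nhdsWithin
  have haC : (-(a:ℂ) * I) ≠ 0 := by
    simp [Complex.ext_iff, ha.ne']
  -- part (i)
  have h1 : Tendsto (fun ε : ℝ => ∫ x in (0:ℝ)..1, Complex.exp (-((ε:ℂ) - a * I) * (x:ℂ) ^ 2))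
      (nhdsWithin 0 (Set.Ioi 0))
      (nhds (∫ x in (0:ℝ)..1, Complex.exp (-(-(a:ℂ) * I) * (x:ℂ) ^ 2))) := by
    simp only [intervalIntegral.integral_of_le zero_le_one]
    apply MeasureTheory.tendsto_integral_filter_of_dominated_convergence
      (fun _ : ℝ => (1:ℝ))
    · filter_upwards with ε
      exact ((Complex.continuous_exp.comp (by continuity)).aestronglyMeasurable).restrict
    · filter_upwards [hmem] with ε hε
      filter_upwards with x
      rw [Complex.norm_exp]
      have : (-((ε:ℂ) - a * I) * (x:ℂ) ^ 2).re = -(ε * x ^ 2) := by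
        simp only [neg_mul, Complex.neg_re, Complex.mul_re, Complex.sub_re, Complex.sub_im,
          ← Complex.ofReal_pow, Complex.ofReal_re, Complex.ofReal_im, Complex.mul_im,
          Complex.mul_re, Complex.I_re, Complex.I_im]
        ring
      rw [this]
      exact Real.exp_le_one_iff.mpr (by nlinarith)
    · simp [integrableOn_const]
    · filter_upwards with x
      have hc : ContinuousAt (fun ε : ℝ => Complex.exp (-((ε:ℂ) - a * I) * (x:ℂ) ^ 2)) 0 := by
        apply Complex.continuous_exp.continuousAt.comp
        exact (((Complex.continuous_ofReal.sub continuous_const).neg.mul continuous_const)).continuousAt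
      have : Tendsto (fun ε : ℝ => Complex.exp (-((ε:ℂ) - a * I) * (x:ℂ) ^ 2))
          (nhdsWithin 0 (Set.Ioi 0)) (nhds (Complex.exp (-((0:ℝ) - (a:ℂ) * I) * (x:ℂ) ^ 2))) := by
        refine (hc.tendsto).mono_left nhdsWithin_le_nhds |>.congr (fun _ => rfl) |>.mono_right ?_
        simp
      simpa using this
  -- part (ii)
  have h2 : Tendsto (fun ε : ℝ => Complex.exp (-((ε:ℂ) - a * I)) / (2 * ((ε:ℂ) - a * I)))
      (nhdsWithin 0 (Set.Ioi 0))
      (nhds (Complex.exp (-(-(a:ℂ) * I)) / (2 * (-(a:ℂ) * I)))) := by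
    have hc : ContinuousAt (fun ε : ℝ => Complex.exp (-((ε:ℂ) - a * I)) / (2 * ((ε:ℂ) - a * I))) 0 := by
      apply ContinuousAt.div
      · exact Complex.continuous_exp.continuousAt.comp
          ((Complex.continuous_ofReal.sub continuous_const).neg.continuousAt)
      · exact (continuous_const.mul (Complex.continuous_ofReal.sub continuous_const)).continuousAt
      · simpa using mul_ne_zero two_ne_zero haC
    have : Tendsto (fun ε : ℝ => Complex.exp (-((ε:ℂ) - a * I)) / (2 * ((ε:ℂ) - a * I)))
        (nhdsWithin 0 (Set.Ioi 0))
        (nhds (Complex.exp (-(((0:ℝ):ℂ) - a * I)) / (2 * (((0:ℝ):ℂ) - a * I)))) :=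
      (hc.tendsto).mono_left nhdsWithin_le_nhds
    simpa using this
  -- part (iii)
  have h3 : Tendsto (fun ε : ℝ =>
      ∫ x in Set.Ioi (1:ℝ), Complex.exp (-((ε:ℂ) - a * I) * (x:ℂ) ^ 2) / (2 * ((ε:ℂ) - a * I) * (x:ℂ) ^ 2))
      (nhdsWithin 0 (Set.Ioi 0))
      (nhds (∫ x in Set.Ioi (1:ℝ),
        Complex.exp (-(-(a:ℂ) * I) * (x:ℂ) ^ 2) / (2 * (-(a:ℂ) * I) * (x:ℂ) ^ 2))) := by
    apply MeasureTheory.tendsto_integral_filter_of_dominated_convergence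
      (fun x : ℝ => (2 * a)⁻¹ * x ^ (-2 : ℝ))
    · filter_upwards [hmem] with ε hε
      have hbne : ((ε:ℂ) - a * I) ≠ 0 := by
        have := fresnel_abs_lb ha ε
        intro h; rw [h] at this; simp at this; linarith
      apply ContinuousOn.aestronglyMeasurable _ measurableSet_Ioi
      apply ContinuousOn.div
      · exact (Complex.continuous_exp.comp (by continuity)).continuousOn
      · exact (continuous_const.mul (Complex.continuous_ofReal.pow 2)).continuousOn
      · intro x hx
        have hx0 : (x:ℝ) ≠ 0 := by have := mem_Ioi.mp hx; positivity
        simp [hbne, Complex.ofReal_ne_zero.mpr hx0]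
    · filter_upwards [hmem] with ε hε
      filter_upwards [ae_restrict_mem measurableSet_Ioi] with x hx
      have hx1 : (1:ℝ) < x := hx
      have hx0 : (0:ℝ) < x := by linarith
      rw [norm_div]
      have hb1 : ‖Complex.exp (-((ε:ℂ) - a * I) * (x:ℂ) ^ 2)‖ ≤ 1 := by
        rw [Complex.norm_exp]
        have : (-((ε:ℂ) - a * I) * (x:ℂ) ^ 2).re = -(ε * x ^ 2) := by
          simp only [neg_mul, Complex.neg_re, Complex.mul_re, Complex.sub_re, Complex.sub_im,
            ← Complex.ofReal_pow, Complex.ofReal_re, Complex.ofReal_im, Complex.mul_im,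
            Complex.mul_re, Complex.I_re, Complex.I_im]
          ring
        rw [this]
        exact Real.exp_le_one_iff.mpr (by nlinarith)
      have hb2 : ‖(2 * ((ε:ℂ) - a * I) * (x:ℂ) ^ 2 : ℂ)‖
          = 2 * ‖(ε:ℂ) - a * I‖ * x ^ 2 := by
        simp [map_mul, Complex.norm_real, abs_of_pos hx0, map_pow,
          abs_of_pos hx0]
      rw [hb2, Real.rpow_neg hx0.le, Real.rpow_two]
      have hlb := fresnel_abs_lb ha ε
      have hden : 0 < 2 * a * x ^ 2 := by positivity
      calc ‖Complex.exp (-((ε:ℂ) - a * I) * (x:ℂ) ^ 2)‖ / (2 * ‖(ε:ℂ) - a * I‖ * x ^ 2)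
          ≤ 1 / (2 * a * x ^ 2) := by
            exact div_le_div₀ zero_le_one hb1 hden (by nlinarith [sq_nonneg x])
        _ = (2 * a)⁻¹ * (x ^ 2)⁻¹ := by field_simp
    · exact ((integrableOn_Ioi_rpow_of_lt (by norm_num) one_pos).const_mul _)
    · filter_upwards [ae_restrict_mem measurableSet_Ioi] with x hx
      have hx1 : (1:ℝ) < x := hx
      have hx0 : (x:ℝ) ≠ 0 := by positivity
      have hc : ContinuousAt (fun ε : ℝ =>
          Complex.exp (-((ε:ℂ) - a * I) * (x:ℂ) ^ 2) / (2 * ((ε:ℂ) - a * I) * (x:ℂ) ^ 2)) 0 := by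
        apply ContinuousAt.div
        · exact Complex.continuous_exp.continuousAt.comp
            (((Complex.continuous_ofReal.sub continuous_const).neg.mul continuous_const)).continuousAt
        · exact ((continuous_const.mul (Complex.continuous_ofReal.sub continuous_const)).mul
            continuous_const).continuousAt
        · refine mul_ne_zero (mul_ne_zero two_ne_zero ?_) (pow_ne_zero _ (Complex.ofReal_ne_zero.mpr hx0))
          simpa using haC
      have : Tendsto (fun ε : ℝ =>
          Complex.exp (-((ε:ℂ) - a * I) * (x:ℂ) ^ 2) / (2 * ((ε:ℂ) - a * I) * (x:ℂ) ^ 2))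
          (nhdsWithin 0 (Set.Ioi 0))
          (nhds (Complex.exp (-(((0:ℝ):ℂ) - a * I) * (x:ℂ) ^ 2)
            / (2 * (((0:ℝ):ℂ) - a * I) * (x:ℂ) ^ 2))) :=
        (hc.tendsto).mono_left nhdsWithin_le_nhds
      simpa using this
  have := (h1.add h2).sub h3
  simp only [fresnelH]
  convert this using 2 <;> simp

end

lemma fresnel_div_eq (a : ℝ) (ha : 0 < a) : (↑π / (-(a:ℂ) * I)) = ((π / a : ℝ) : ℂ) * I := by
  have haC : ((a:ℂ)) ≠ 0 := Complex.ofReal_ne_zero.mpr ha.ne'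
  have hne : (-(a:ℂ) * I) ≠ 0 := by simp [haC, Complex.I_ne_zero]
  rw [div_eq_iff hne]
  push_cast [ne_eq]
  field_simp
  ring_nf
  simp [Complex.I_sq]

lemma fresnel_cpow_eq (a : ℝ) (ha : 0 < a) :
    (((π / a : ℝ) : ℂ) * I) ^ (1 / 2 : ℂ) = ((Real.sqrt (π / (2 * a)) : ℝ) : ℂ) * (1 + I) := by
  have hr : 0 < π / a := div_pos Real.pi_pos ha
  have hz : (((π / a : ℝ) : ℂ) * I) ≠ 0 := by
    exact mul_ne_zero (Complex.ofReal_ne_zero.mpr hr.ne') Complex.I_ne_zero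
  rw [Complex.cpow_def_of_ne_zero hz]
  have hlog : Complex.log (((π / a : ℝ) : ℂ) * I) = (Real.log (π / a) : ℂ) + ((π / 2 : ℝ) : ℂ) * I := by
    rw [Complex.log, Complex.arg_real_mul _ hr, Complex.arg_I]
    have habs : ‖((π / a : ℝ) : ℂ) * I‖ = π / a := by
      simp [map_mul, Complex.norm_real, abs_of_pos hr, _root_.abs_of_pos Real.pi_pos,
        _root_.abs_of_pos ha]
    rw [habs]
  rw [hlog]
  have harg : ((Real.log (π / a) : ℂ) + ((π / 2 : ℝ) : ℂ) * I) * (1 / 2)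
      = ((Real.log (π / a) / 2 : ℝ) : ℂ) + ((π / 4 : ℝ) : ℂ) * I := by
    push_cast; ring
  rw [harg, Complex.exp_add, Complex.exp_mul_I]
  rw [← Complex.ofReal_exp, ← Complex.ofReal_cos, ← Complex.ofReal_sin]
  rw [Real.cos_pi_div_four, Real.sin_pi_div_four]
  have hexp : Real.exp (Real.log (π / a) / 2) = Real.sqrt (π / a) := by
    rw [Real.sqrt_eq_rpow, Real.rpow_def_of_pos hr]
    congr 1; ring
  rw [hexp]
  have h2 : Real.sqrt 2 ≠ 0 := by positivity
  have key : Real.sqrt (π / a) * (Real.sqrt 2 / 2) = Real.sqrt (π / (2 * a)) := by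
    rw [show π / (2 * a) = (π / a) * 2⁻¹ by ring]
    rw [Real.sqrt_mul hr.le, Real.sqrt_inv]
    congr 1
    rw [eq_comm]
    field_simp
    exact (Real.sq_sqrt (by norm_num)).symm
  rw [← key]
  push_cast
  ring

lemma fresnelH_value {a : ℝ} (ha : 0 < a) :
    fresnelH (-(a:ℂ) * I) = ((Real.sqrt (π / (2 * a)) : ℝ) : ℂ) * (1 + I) / 2 := by
  have haC : (-(a:ℂ) * I) ≠ 0 :=
    mul_ne_zero (neg_ne_zero.mpr (Complex.ofReal_ne_zero.mpr ha.ne')) Complex.I_ne_zero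
  have h1 := fresnel_H_cont ha
  have hslit : (↑π / (-(a:ℂ) * I)) ∈ Complex.slitPlane := by
    rw [fresnel_div_eq a ha]
    refine Or.inr ?_
    simp [div_ne_zero Real.pi_ne_zero ha.ne']
  have hcont : ContinuousAt (fun z : ℂ => (↑π / z) ^ (1 / 2 : ℂ) / 2) (-(a:ℂ) * I) := by
    apply ContinuousAt.div_const
    exact (continuousAt_cpow_const hslit).comp (continuousAt_const.div continuousAt_id haC)
  have h2 : Tendsto (fun ε : ℝ => (↑π / ((ε : ℂ) - a * I)) ^ (1 / 2 : ℂ) / 2)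
      (nhdsWithin 0 (Set.Ioi 0)) (nhds ((↑π / (-(a:ℂ) * I)) ^ (1 / 2 : ℂ) / 2)) := by
    have hc0 : ContinuousAt (fun ε : ℝ => (ε : ℂ) - a * I) 0 :=
      (Complex.continuous_ofReal.sub continuous_const).continuousAt
    have hz : (((0:ℝ) : ℂ) - a * I) = -(a:ℂ) * I := by simp
    rw [← hz] at hcont
    have := (hcont.tendsto.comp hc0.tendsto).mono_left (nhdsWithin_le_nhds (s := Set.Ioi 0))
    simp only [Function.comp_def] at this
    rw [hz] at this
    exact this
  have heq : ∀ᶠ ε : ℝ in nhdsWithin 0 (Set.Ioi 0),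
      fresnelH ((ε : ℂ) - a * I) = (↑π / ((ε : ℂ) - a * I)) ^ (1 / 2 : ℂ) / 2 := by
    filter_upwards [eventually_mem_nhdsWithin] with ε (hε : 0 < ε)
    apply fresnelH_eq_gauss
    simpa using hε
  have h1' := h1.congr' heq
  have := tendsto_nhds_unique h1' h2
  rw [this, fresnel_div_eq a ha, fresnel_cpow_eq a ha]


lemma fresnel_limit (a : ℝ) (ha : 0 < a) :
    Tendsto (fun T : ℝ => ∫ x in (0:ℝ)..T, Complex.exp (-(-(a:ℂ) * I) * (x:ℂ) ^ 2)) atTop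
      (nhds (((Real.sqrt (π / (2 * a)) : ℝ) : ℂ) * (1 + I) / 2)) := by
  have haC : (-(a:ℂ) * I) ≠ 0 :=
    mul_ne_zero (neg_ne_zero.mpr (Complex.ofReal_ne_zero.mpr ha.ne')) Complex.I_ne_zero
  have h := fresnel_tendsto_F (-(a:ℂ) * I) (by simp) haC
  rwa [fresnelH_value ha] at h

/-- integrand -/
noncomputable def fE (a : ℝ) (u : ℝ) : ℂ := Complex.exp (-(-(a:ℂ) * I) * (u:ℂ) ^ 2)

/-- partial integral -/
noncomputable def fPhi (a : ℝ) (T : ℝ) : ℂ := ∫ u in (0:ℝ)..T, fE a u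

lemma fE_cont (a : ℝ) : Continuous (fE a) := by
  unfold fE; exact Complex.continuous_exp.comp (by continuity)

lemma fE_even (a x : ℝ) : fE a (-x) = fE a x := by
  unfold fE; push_cast; ring_nf

lemma fPhi_tendsto (a : ℝ) (ha : 0 < a) :
    Tendsto (fPhi a) atTop (nhds (((Real.sqrt (π / (2 * a)) : ℝ) : ℂ) * (1 + I) / 2)) :=
  fresnel_limit a ha

lemma fPhi_neg (a d : ℝ) : fPhi a (-d) = -fPhi a d := by
  unfold fPhi
  have h1 : (∫ x in (0:ℝ)..d, fE a (-x)) = ∫ x in (-d:ℝ)..(0:ℝ), fE a x := by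
    simpa using intervalIntegral.integral_comp_neg (a := (0:ℝ)) (b := d) (fE a)
  rw [intervalIntegral.integral_symm, ← h1,
    intervalIntegral.integral_congr fun x _ => fE_even a x]

theorem stmt3 (a : ℝ) (ha : 0 < a) (s : ℝ) :
    Tendsto (fun R : ℝ => ∫ x in (0:ℝ)..R, Real.cos (a * x ^ 2) * Real.cos (s * x)) atTop
      (nhds ((1 / 2) * Real.sqrt (π / (2 * a)) *
        (Real.cos (s ^ 2 / (4 * a)) + Real.sin (s ^ 2 / (4 * a))))) := by
  have hEint : ∀ u v : ℝ, IntervalIntegrable (fE a) volume u v :=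
    fun u v => (fE_cont a).intervalIntegrable u v
  set d : ℝ := s / (2 * a) with hd
  set c : ℝ := s ^ 2 / (4 * a) with hc
  have hAcont : Continuous (fun x : ℝ => Complex.exp (((a * x ^ 2 + s * x : ℝ) : ℂ) * I)) :=
    Complex.continuous_exp.comp (by continuity)
  have hBcont : Continuous (fun x : ℝ => Complex.exp (((a * x ^ 2 - s * x : ℝ) : ℂ) * I)) :=
    Complex.continuous_exp.comp (by continuity)
  -- pointwise identity
  have hpt : ∀ x : ℝ, Real.cos (a * x ^ 2) * Real.cos (s * x)
      = (Complex.exp (((a * x ^ 2 + s * x : ℝ) : ℂ) * I)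
        + Complex.exp (((a * x ^ 2 - s * x : ℝ) : ℂ) * I)).re / 2 := by
    intro x
    rw [Complex.add_re, Complex.exp_ofReal_mul_I_re, Complex.exp_ofReal_mul_I_re,
      Real.cos_add, Real.cos_sub]
    ring
  have hAE : ∀ x : ℝ, Complex.exp (((a * x ^ 2 + s * x : ℝ) : ℂ) * I)
      = Complex.exp (-(c:ℂ) * I) * fE a (x + d) := by
    intro x
    rw [fE, ← Complex.exp_add]
    congr 1
    have hr : a * x ^ 2 + s * x = a * (x + d) ^ 2 - c := by
      rw [hc, hd]; field_simp; ring
    rw [hr]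
    push_cast
    ring
  have hBE : ∀ x : ℝ, Complex.exp (((a * x ^ 2 - s * x : ℝ) : ℂ) * I)
      = Complex.exp (-(c:ℂ) * I) * fE a (x - d) := by
    intro x
    rw [fE, ← Complex.exp_add]
    congr 1
    have hr : a * x ^ 2 - s * x = a * (x - d) ^ 2 - c := by
      rw [hc, hd]; field_simp; ring
    rw [hr]
    push_cast
    ring
  -- integral identity for each R
  have hkey : ∀ R : ℝ, (∫ x in (0:ℝ)..R, Real.cos (a * x ^ 2) * Real.cos (s * x))
      = ((Complex.exp (-(c:ℂ) * I) * ((fPhi a (R + d) - fPhi a d)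
          + (fPhi a (R - d) - fPhi a (-d)))) / 2).re := by
    intro R
    have hiA : IntervalIntegrable (fun x : ℝ => Complex.exp (((a * x ^ 2 + s * x : ℝ) : ℂ) * I))
        volume 0 R := hAcont.intervalIntegrable 0 R
    have hiB : IntervalIntegrable (fun x : ℝ => Complex.exp (((a * x ^ 2 - s * x : ℝ) : ℂ) * I))
        volume 0 R := hBcont.intervalIntegrable 0 R
    have e1 : (∫ x in (0:ℝ)..R, Real.cos (a * x ^ 2) * Real.cos (s * x))
        = (∫ x in (0:ℝ)..R, (Complex.exp (((a * x ^ 2 + s * x : ℝ) : ℂ) * I)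
            + Complex.exp (((a * x ^ 2 - s * x : ℝ) : ℂ) * I)).re) / 2 := by
      rw [intervalIntegral.integral_congr fun x _ => hpt x, intervalIntegral.integral_div]
    have e2 : (∫ x in (0:ℝ)..R, (Complex.exp (((a * x ^ 2 + s * x : ℝ) : ℂ) * I)
          + Complex.exp (((a * x ^ 2 - s * x : ℝ) : ℂ) * I)).re)
        = (∫ x in (0:ℝ)..R, (Complex.exp (((a * x ^ 2 + s * x : ℝ) : ℂ) * I)
          + Complex.exp (((a * x ^ 2 - s * x : ℝ) : ℂ) * I))).re := by
      exact Complex.reCLM.intervalIntegral_comp_comm (hiA.add hiB)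
    have e3 : (∫ x in (0:ℝ)..R, (Complex.exp (((a * x ^ 2 + s * x : ℝ) : ℂ) * I)
          + Complex.exp (((a * x ^ 2 - s * x : ℝ) : ℂ) * I)))
        = (∫ x in (0:ℝ)..R, Complex.exp (((a * x ^ 2 + s * x : ℝ) : ℂ) * I))
          + ∫ x in (0:ℝ)..R, Complex.exp (((a * x ^ 2 - s * x : ℝ) : ℂ) * I) :=
      intervalIntegral.integral_add hiA hiB
    have e4 : (∫ x in (0:ℝ)..R, Complex.exp (((a * x ^ 2 + s * x : ℝ) : ℂ) * I))
        = Complex.exp (-(c:ℂ) * I) * (fPhi a (R + d) - fPhi a d) := by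
      rw [intervalIntegral.integral_congr fun x _ => hAE x,
        intervalIntegral.integral_const_mul]
      congr 1
      have := intervalIntegral.integral_comp_add_right (a := (0:ℝ)) (b := R) (fE a) d
      rw [this, zero_add]
      rw [← intervalIntegral.integral_interval_sub_left (hEint 0 (R+d)) (hEint 0 d)]
      rfl
    have e5 : (∫ x in (0:ℝ)..R, Complex.exp (((a * x ^ 2 - s * x : ℝ) : ℂ) * I))
        = Complex.exp (-(c:ℂ) * I) * (fPhi a (R - d) - fPhi a (-d)) := by
      rw [intervalIntegral.integral_congr fun x _ => hBE x,
        intervalIntegral.integral_const_mul]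
      congr 1
      have := intervalIntegral.integral_comp_sub_right (a := (0:ℝ)) (b := R) (fE a) d
      rw [this, zero_sub]
      rw [← intervalIntegral.integral_interval_sub_left (hEint 0 (R-d)) (hEint 0 (-d))]
      rfl
    rw [e1, e2, e3, e4, e5, ← mul_add]
    rw [Complex.div_re]
    simp [Complex.normSq]
    ring
  -- limits
  set L : ℂ := ((Real.sqrt (π / (2 * a)) : ℝ) : ℂ) * (1 + I) / 2 with hL
  have hΦlim : Tendsto (fPhi a) atTop (nhds L) := fPhi_tendsto a ha
  have hlim1 : Tendsto (fun R : ℝ => fPhi a (R + d)) atTop (nhds L) :=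
    hΦlim.comp (tendsto_atTop_add_const_right atTop d tendsto_id)
  have hlim2 : Tendsto (fun R : ℝ => fPhi a (R - d)) atTop (nhds L) := by
    have := hΦlim.comp (tendsto_atTop_add_const_right atTop (-d) tendsto_id)
    simpa [sub_eq_add_neg, Function.comp_def] using this
  have hlimC : Tendsto (fun R : ℝ =>
      ((Complex.exp (-(c:ℂ) * I) * ((fPhi a (R + d) - fPhi a d)
        + (fPhi a (R - d) - fPhi a (-d)))) / 2).re) atTop
      (nhds ((Complex.exp (-(c:ℂ) * I) * ((L - fPhi a d) + (L - fPhi a (-d))) / 2).re)) := by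
    apply (Complex.continuous_re.tendsto _).comp
    exact ((((hlim1.sub tendsto_const_nhds).add (hlim2.sub tendsto_const_nhds)).const_mul
      _).div_const 2)
  have hfinal := hlimC.congr (fun R => (hkey R).symm)
  convert hfinal using 2
  rw [fPhi_neg, sub_neg_eq_add]
  rw [show (L - fPhi a d) + (L + fPhi a d) = 2 * L by ring]
  rw [hL]
  rw [show -(c:ℂ) * I = ((-c : ℝ) : ℂ) * I by push_cast; ring]
  rw [Complex.exp_mul_I, ← Complex.ofReal_cos, ← Complex.ofReal_sin, Real.cos_neg, Real.sin_neg]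
  rw [Complex.div_re]
  simp [Complex.normSq, Complex.add_re, Complex.mul_re, Complex.add_im, Complex.mul_im,
    Complex.cos_ofReal_re, Complex.sin_ofReal_re]
  ring



end FresnelProof
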